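/- Under the setup of a zero-mean group-symmetric kernel h, if a projection h_{a,b} and the full kernel h are evaluated at argument tuples sharing exactly r common first-sample observations and s common second-sample observations, then E[h_{a,b}(...) · h(...)] = ξ_{r,s} := Var(h_{r,s}). -/

import Mathlib

open MeasureTheory ProbabilityTheory
open scoped ENNReal NNReal

/-- Precomposition with an injective map preserves the i.i.d. product measure. -/
lemma mp_comp {ι κ : Type*} [Fintype ι] [Fintype κ] (μ : Measure ℝ) [IsProbabilityMeasure μ]
    {j : κ → ι} (hj : Function.Injective j) :
    MeasurePreserving (fun w : ι → ℝ => w ∘ j)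
      (Measure.pi fun _ => μ) (Measure.pi fun _ => μ) := by
  classical
  have hm : Measurable (fun w : ι → ℝ => w ∘ j) :=
    measurable_pi_lambda _ fun k => measurable_pi_apply (j k)
  refine ⟨hm, ?_⟩
  refine (Measure.pi_eq fun s hs => ?_).symm
  rw [Measure.map_apply hm (MeasurableSet.univ_pi hs)]
  have hpre : (fun w : ι → ℝ => w ∘ j) ⁻¹' (Set.univ.pi s)
      = Set.univ.pi (fun i => if h : ∃ k, j k = i then s h.choose else Set.univ) := by
    ext w
    simp only [Set.mem_preimage, Set.mem_univ_pi, Function.comp_apply]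
    constructor
    · intro H i
      by_cases h : ∃ k, j k = i
      · rw [dif_pos h]
        have := H h.choose
        rwa [h.choose_spec] at this
      · simp [dif_neg h]
    · intro H k
      have h : ∃ k', j k' = j k := ⟨k, rfl⟩
      have hk : h.choose = k := hj h.choose_spec
      have := H (j k)
      rwa [dif_pos h, hk] at this
  rw [hpre, Measure.pi_pi]
  have h1 : ∀ i ∈ Finset.univ, i ∉ Finset.univ.image j →
      μ (if h : ∃ k, j k = i then s h.choose else Set.univ) = 1 := by
    intro i _ hi
    have : ¬ ∃ k, j k = i := by
      intro ⟨k, hk⟩; exact hi (Finset.mem_image.mpr ⟨k, Finset.mem_univ _, hk⟩)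
    rw [dif_neg this, measure_univ]
  rw [← Finset.prod_subset (Finset.subset_univ (Finset.univ.image j)) h1,
    Finset.prod_image (fun k _ k' _ hkk => hj hkk)]
  refine Finset.prod_congr rfl fun k _ => ?_
  have h : ∃ k', j k' = j k := ⟨k, rfl⟩
  rw [dif_pos h, hj h.choose_spec]

variable {F0 F1 : Measure ℝ} [IsProbabilityMeasure F0] [IsProbabilityMeasure F1]

/-- product measure notation -/
noncomputable def MM (F0 F1 : Measure ℝ) (ι0 ι1 : Type*) [Fintype ι0] [Fintype ι1] :
    Measure ((ι0 → ℝ) × (ι1 → ℝ)) :=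
  (Measure.pi fun _ : ι0 => F0).prod (Measure.pi fun _ : ι1 => F1)

instance {ι0 ι1 : Type*} [Fintype ι0] [Fintype ι1] :
    IsProbabilityMeasure (MM F0 F1 ι0 ι1) := by
  unfold MM; infer_instance

lemma mp_pair {ι0 ι1 κ0 κ1 : Type*} [Fintype ι0] [Fintype ι1] [Fintype κ0] [Fintype κ1]
    {j0 : κ0 → ι0} {j1 : κ1 → ι1} (h0 : Function.Injective j0) (h1 : Function.Injective j1) :
    MeasurePreserving (fun w : (ι0 → ℝ) × (ι1 → ℝ) => (w.1 ∘ j0, w.2 ∘ j1))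
      (MM F0 F1 ι0 ι1) (MM F0 F1 κ0 κ1) :=
  (mp_comp F0 h0).prod (mp_comp F1 h1)

lemma integral_comp_pair {ι0 ι1 κ0 κ1 : Type*} [Fintype ι0] [Fintype ι1] [Fintype κ0] [Fintype κ1]
    {j0 : κ0 → ι0} {j1 : κ1 → ι1} (h0 : Function.Injective j0) (h1 : Function.Injective j1)
    {g : (κ0 → ℝ) × (κ1 → ℝ) → ℝ} (hg : AEStronglyMeasurable g (MM F0 F1 κ0 κ1)) :
    ∫ w : (ι0 → ℝ) × (ι1 → ℝ), g (w.1 ∘ j0, w.2 ∘ j1) ∂(MM F0 F1 ι0 ι1)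
      = ∫ v, g v ∂(MM F0 F1 κ0 κ1) := by
  have hmp := mp_pair (F0 := F0) (F1 := F1) h0 h1
  rw [← hmp.map_eq, integral_map hmp.measurable.aemeasurable (by rwa [hmp.map_eq])]

lemma memL2_comp_pair {m0 m1 : ℕ} {h : (Fin m0 → ℝ) → (Fin m1 → ℝ) → ℝ}
    (hL2 : MemLp (fun p : (Fin m0 → ℝ) × (Fin m1 → ℝ) => h p.1 p.2) 2 (MM F0 F1 (Fin m0) (Fin m1)))
    {ι0 ι1 : Type*} [Fintype ι0] [Fintype ι1]
    {f0 : Fin m0 → ι0} {f1 : Fin m1 → ι1}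
    (h0 : Function.Injective f0) (h1 : Function.Injective f1) :
    MemLp (fun w : (ι0 → ℝ) × (ι1 → ℝ) => h (w.1 ∘ f0) (w.2 ∘ f1)) 2 (MM F0 F1 ι0 ι1) :=
  hL2.comp_measurePreserving (mp_pair h0 h1)

lemma integrable_mul_L2 {α : Type*} [MeasurableSpace α] {μ : Measure α} {f g : α → ℝ}
    (hf : MemLp f 2 μ) (hg : MemLp g 2 μ) : Integrable (fun x => f x * g x) μ := by
  have h1 : (1 : ℝ≥0∞) / 1 = 1 / 2 + 1 / 2 := by
    rw [div_one, ENNReal.add_halves]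
  have := memLp_one_iff_integrable.mp (hg.smul hf (r := 1))
  exact this

lemma meas_comp_pair {m0 m1 : ℕ} {h : (Fin m0 → ℝ) → (Fin m1 → ℝ) → ℝ}
    (hMeas : Measurable (fun p : (Fin m0 → ℝ) × (Fin m1 → ℝ) => h p.1 p.2))
    {ι0 ι1 : Type*} (f0 : Fin m0 → ι0) (f1 : Fin m1 → ι1) :
    Measurable (fun w : (ι0 → ℝ) × (ι1 → ℝ) => h (w.1 ∘ f0) (w.2 ∘ f1)) := by
  have : Measurable (fun w : (ι0 → ℝ) × (ι1 → ℝ) => (w.1 ∘ f0, w.2 ∘ f1)) :=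
    Measurable.prodMk
      (measurable_pi_lambda _ fun i => (measurable_pi_apply (f0 i)).comp measurable_fst)
      (measurable_pi_lambda _ fun i => (measurable_pi_apply (f1 i)).comp measurable_snd)
  exact hMeas.comp this

lemma mp_midswap {A B C D : Type*} [MeasurableSpace A] [MeasurableSpace B] [MeasurableSpace C]
    [MeasurableSpace D] (μa : Measure A) (μb : Measure B) (μc : Measure C) (μd : Measure D)
    [SigmaFinite μa] [SigmaFinite μb] [SigmaFinite μc] [SigmaFinite μd] :
    MeasurePreserving (fun z : (A × C) × (B × D) => ((z.1.1, z.2.1), (z.1.2, z.2.2)))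
      ((μa.prod μc).prod (μb.prod μd)) ((μa.prod μb).prod (μc.prod μd)) := by
  have e1 := measurePreserving_prodAssoc μa μc (μb.prod μd)
  have e2 := (measurePreserving_prodAssoc μc μb μd).symm MeasurableEquiv.prodAssoc
  have e2' := (MeasurePreserving.id μa).prod e2
  have e3 := (Measure.measurePreserving_swap (μ := μc) (ν := μb)).prod
    (MeasurePreserving.id μd)
  have e3' := (MeasurePreserving.id μa).prod e3
  have e4 := measurePreserving_prodAssoc μb μc μd
  have e4' := (MeasurePreserving.id μa).prod e4
  have e5 := (measurePreserving_prodAssoc μa μb (μc.prod μd)).symm MeasurableEquiv.prodAssoc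
  have heq : (fun z : (A × C) × (B × D) => ((z.1.1, z.2.1), (z.1.2, z.2.2)))
      = (MeasurableEquiv.prodAssoc.symm : A × (B × (C × D)) → (A × B) × (C × D)) ∘
        (Prod.map id (fun x : (B × C) × D => MeasurableEquiv.prodAssoc x)) ∘
        (Prod.map id (Prod.map (Prod.swap) id)) ∘
        (Prod.map id (fun x : C × (B × D) => MeasurableEquiv.prodAssoc.symm x)) ∘
        (fun x : (A × C) × (B × D) => MeasurableEquiv.prodAssoc x) := by
    funext z
    simp [MeasurableEquiv.prodAssoc, Equiv.prodAssoc, Prod.map, Function.comp]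
  rw [heq]
  exact e5.comp (e4'.comp (e3'.comp (e2'.comp e1)))

lemma mp_xi {ι0 ι1 κ0 κ1 : Type*} [Fintype ι0] [Fintype ι1] [Fintype κ0] [Fintype κ1] :
    MeasurePreserving
      (fun z : ((ι0 → ℝ) × (ι1 → ℝ)) × ((κ0 → ℝ) × (κ1 → ℝ)) =>
        ((Sum.elim z.1.1 z.2.1 : ι0 ⊕ κ0 → ℝ), (Sum.elim z.1.2 z.2.2 : ι1 ⊕ κ1 → ℝ)))
      ((MM F0 F1 ι0 ι1).prod (MM F0 F1 κ0 κ1)) (MM F0 F1 (ι0 ⊕ κ0) (ι1 ⊕ κ1)) := by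
  have hsw := mp_midswap (Measure.pi fun _ : ι0 => F0) (Measure.pi fun _ : κ0 => F0)
    (Measure.pi fun _ : ι1 => F1) (Measure.pi fun _ : κ1 => F1)
  have h0 := measurePreserving_sumPiEquivProdPi_symm (fun _ : ι0 ⊕ κ0 => (F0 : Measure ℝ))
  have h1 := measurePreserving_sumPiEquivProdPi_symm (fun _ : ι1 ⊕ κ1 => (F1 : Measure ℝ))
  have hcomb := (h0.prod h1).comp hsw
  have heq : (fun z : ((ι0 → ℝ) × (ι1 → ℝ)) × ((κ0 → ℝ) × (κ1 → ℝ)) =>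
        ((Sum.elim z.1.1 z.2.1 : ι0 ⊕ κ0 → ℝ), (Sum.elim z.1.2 z.2.2 : ι1 ⊕ κ1 → ℝ)))
      = (Prod.map (MeasurableEquiv.sumPiEquivProdPi (fun _ : ι0 ⊕ κ0 => ℝ)).symm
          (MeasurableEquiv.sumPiEquivProdPi (fun _ : ι1 ⊕ κ1 => ℝ)).symm) ∘
        (fun z : ((ι0 → ℝ) × (ι1 → ℝ)) × ((κ0 → ℝ) × (κ1 → ℝ)) =>
          ((z.1.1, z.2.1), (z.1.2, z.2.2))) := by
    funext z
    refine Prod.ext ?_ ?_ <;>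
      · funext i
        cases i <;>
          simp [MeasurableEquiv.sumPiEquivProdPi, Equiv.sumPiEquivProdPi, Prod.map]
  exact heq ▸ hcomb

lemma merge_pair {ι0 ι1 κ0 κ1 : Type*} [Fintype ι0] [Fintype ι1] [Fintype κ0] [Fintype κ1]
    {G : (ι0 ⊕ κ0 → ℝ) × (ι1 ⊕ κ1 → ℝ) → ℝ}
    (hGm : AEStronglyMeasurable G (MM F0 F1 (ι0 ⊕ κ0) (ι1 ⊕ κ1)))
    (hGi : Integrable G (MM F0 F1 (ι0 ⊕ κ0) (ι1 ⊕ κ1))) :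
    ∫ w : (ι0 → ℝ) × (ι1 → ℝ), ∫ p : (κ0 → ℝ) × (κ1 → ℝ),
        G (Sum.elim w.1 p.1, Sum.elim w.2 p.2) ∂(MM F0 F1 κ0 κ1) ∂(MM F0 F1 ι0 ι1)
      = ∫ v, G v ∂(MM F0 F1 (ι0 ⊕ κ0) (ι1 ⊕ κ1)) := by
  have hXi := mp_xi (F0 := F0) (F1 := F1) (ι0 := ι0) (ι1 := ι1) (κ0 := κ0) (κ1 := κ1)
  have hGm' : AEStronglyMeasurable G
      (Measure.map (fun z : ((ι0 → ℝ) × (ι1 → ℝ)) × ((κ0 → ℝ) × (κ1 → ℝ)) =>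
        ((Sum.elim z.1.1 z.2.1 : ι0 ⊕ κ0 → ℝ), (Sum.elim z.1.2 z.2.2 : ι1 ⊕ κ1 → ℝ)))
        ((MM F0 F1 ι0 ι1).prod (MM F0 F1 κ0 κ1))) := by rwa [hXi.map_eq]
  have hint : Integrable (fun z : ((ι0 → ℝ) × (ι1 → ℝ)) × ((κ0 → ℝ) × (κ1 → ℝ)) =>
      G (Sum.elim z.1.1 z.2.1, Sum.elim z.1.2 z.2.2))
      ((MM F0 F1 ι0 ι1).prod (MM F0 F1 κ0 κ1)) := by
    have := (integrable_map_measure hGm' hXi.measurable.aemeasurable).mp (by rwa [hXi.map_eq])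
    exact this
  calc ∫ w : (ι0 → ℝ) × (ι1 → ℝ), ∫ p : (κ0 → ℝ) × (κ1 → ℝ),
        G (Sum.elim w.1 p.1, Sum.elim w.2 p.2) ∂(MM F0 F1 κ0 κ1) ∂(MM F0 F1 ι0 ι1)
      = ∫ z : ((ι0 → ℝ) × (ι1 → ℝ)) × ((κ0 → ℝ) × (κ1 → ℝ)),
          G (Sum.elim z.1.1 z.2.1, Sum.elim z.1.2 z.2.2)
          ∂((MM F0 F1 ι0 ι1).prod (MM F0 F1 κ0 κ1)) := (integral_integral hint)
    _ = ∫ v, G v ∂(MM F0 F1 (ι0 ⊕ κ0) (ι1 ⊕ κ1)) := by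
        rw [← hXi.map_eq, integral_map hXi.measurable.aemeasurable hGm']

def canonβ (m r : ℕ) (i : Fin m) : Fin m ⊕ Fin (m - r) :=
  if h : (i : ℕ) < min r m then Sum.inl ⟨i, by omega⟩
  else Sum.inr ⟨(i : ℕ) - r, by have := i.isLt; omega⟩

lemma canonβ_injective (m r : ℕ) : Function.Injective (canonβ m r) := by
  intro i j hij
  unfold canonβ at hij
  split_ifs at hij with h1 h2 h2 <;>
    simp only [Sum.inl.injEq, Sum.inr.injEq, Fin.mk.injEq] at hij <;>
    · have hi := i.isLt; have hj := j.isLt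
      exact Fin.ext (by omega)

lemma exists_reindex {m r : ℕ} {ι : Type*} [Fintype ι] [DecidableEq ι]
    {α β : Fin m → ι} (hα : Function.Injective α) (hβ : Function.Injective β)
    (hcard : ((Finset.univ.image α) ∩ (Finset.univ.image β)).card = r) :
    ∃ (π ρ : Equiv.Perm (Fin m)) (j : Fin m ⊕ Fin (m - r) → ι),
      Function.Injective j ∧ (∀ i, α (π i) = j (Sum.inl i)) ∧
      (∀ i, β (ρ i) = j (canonβ m r i)) := by
  classical
  set A := Finset.univ.image α with hA_def
  set B := Finset.univ.image β with hB_def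
  set C := A ∩ B with hC_def
  have hA : A.card = m := by
    rw [hA_def, Finset.card_image_of_injective _ hα, Finset.card_univ, Fintype.card_fin]
  have hB : B.card = m := by
    rw [hB_def, Finset.card_image_of_injective _ hβ, Finset.card_univ, Fintype.card_fin]
  have hrm : r ≤ m := by
    rw [← hcard, ← hA]; exact Finset.card_le_card Finset.inter_subset_left
  have hAC : (A \ C).card = m - r := by
    rw [Finset.card_sdiff_of_subset (by rw [hC_def]; exact Finset.inter_subset_left), hA, hcard]
  have hBC : (B \ C).card = m - r := by
    rw [Finset.card_sdiff_of_subset (by rw [hC_def]; exact Finset.inter_subset_right), hB, hcard]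
  let eC : Fin r ≃ {x // x ∈ C} := (Finset.equivFinOfCardEq hcard).symm
  let eA : Fin (m - r) ≃ {x // x ∈ A \ C} := (Finset.equivFinOfCardEq hAC).symm
  let eB : Fin (m - r) ≃ {x // x ∈ B \ C} := (Finset.equivFinOfCardEq hBC).symm
  let fA : Fin m → ι := fun i =>
    if h : (i : ℕ) < r then (eC ⟨i, h⟩ : ι) else (eA ⟨(i : ℕ) - r, by have := i.isLt; omega⟩ : ι)
  let fB : Fin m → ι := fun i =>
    if h : (i : ℕ) < r then (eC ⟨i, h⟩ : ι) else (eB ⟨(i : ℕ) - r, by have := i.isLt; omega⟩ : ι)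
  have hCA : ∀ x ∈ C, x ∈ A := fun x hx => (Finset.mem_inter.mp hx).1
  have hCB : ∀ x ∈ C, x ∈ B := fun x hx => (Finset.mem_inter.mp hx).2
  have hfA_mem : ∀ i, fA i ∈ A := by
    intro i; unfold fA; split_ifs with h
    · exact hCA _ (eC ⟨i, h⟩).2
    · exact (Finset.mem_sdiff.mp (eA _).2).1
  have hfB_mem : ∀ i, fB i ∈ B := by
    intro i; unfold fB; split_ifs with h
    · exact hCB _ (eC ⟨i, h⟩).2
    · exact (Finset.mem_sdiff.mp (eB _).2).1
  have hfA_inj : Function.Injective fA := by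
    intro i j hij
    unfold fA at hij
    split_ifs at hij with h1 h2 h2
    · have := eC.injective (Subtype.ext hij)
      exact Fin.ext (by simpa [Fin.mk.injEq] using congrArg Fin.val this)
    · exact absurd (hij ▸ (eC ⟨i, h1⟩).2) ((Finset.mem_sdiff.mp (eA _).2).2)
    · exact absurd (hij.symm ▸ (eC ⟨j, h2⟩).2) ((Finset.mem_sdiff.mp (eA _).2).2)
    · have := eA.injective (Subtype.ext hij)
      have hi := i.isLt; have hj := j.isLt
      exact Fin.ext (by simp only [Fin.mk.injEq] at this; omega)
  have hfB_inj : Function.Injective fB := by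
    intro i j hij
    unfold fB at hij
    split_ifs at hij with h1 h2 h2
    · have := eC.injective (Subtype.ext hij)
      exact Fin.ext (by simpa [Fin.mk.injEq] using congrArg Fin.val this)
    · exact absurd (hij ▸ (eC ⟨i, h1⟩).2) ((Finset.mem_sdiff.mp (eB _).2).2)
    · exact absurd (hij.symm ▸ (eC ⟨j, h2⟩).2) ((Finset.mem_sdiff.mp (eB _).2).2)
    · have := eB.injective (Subtype.ext hij)
      have hi := i.isLt; have hj := j.isLt
      exact Fin.ext (by simp only [Fin.mk.injEq] at this; omega)
  have hexA : ∀ i, ∃ k, α k = fA i := by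
    intro i
    obtain ⟨k, -, hk⟩ := Finset.mem_image.mp (hfA_mem i)
    exact ⟨k, hk⟩
  have hexB : ∀ i, ∃ k, β k = fB i := by
    intro i
    obtain ⟨k, -, hk⟩ := Finset.mem_image.mp (hfB_mem i)
    exact ⟨k, hk⟩
  set π0 : Fin m → Fin m := fun i => (hexA i).choose with hπ0_def
  have hπ0 : ∀ i, α (π0 i) = fA i := fun i => (hexA i).choose_spec
  have hπ0inj : Function.Injective π0 := by
    intro i j hij
    exact hfA_inj (by rw [← hπ0, ← hπ0, hij])
  set ρ0 : Fin m → Fin m := fun i => (hexB i).choose with hρ0_def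
  have hρ0 : ∀ i, β (ρ0 i) = fB i := fun i => (hexB i).choose_spec
  have hρ0inj : Function.Injective ρ0 := by
    intro i j hij
    exact hfB_inj (by rw [← hρ0, ← hρ0, hij])
  refine ⟨Equiv.ofBijective π0 (Finite.injective_iff_bijective.mp hπ0inj),
    Equiv.ofBijective ρ0 (Finite.injective_iff_bijective.mp hρ0inj),
    Sum.elim fA (fun t => (eB t : ι)), ?_, fun i => hπ0 i, ?_⟩
  · intro x y hxy
    cases x with
    | inl a => cases y with
      | inl b => simp only [Sum.elim_inl] at hxy; exact congrArg Sum.inl (hfA_inj hxy)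
      | inr t =>
        simp only [Sum.elim_inl, Sum.elim_inr] at hxy
        have h1 : fA a ∈ A := hfA_mem a
        have h2 := (eB t).2
        rw [Finset.mem_sdiff] at h2
        exact absurd (Finset.mem_inter.mpr ⟨hxy ▸ h1, h2.1⟩) h2.2
    | inr t => cases y with
      | inl b =>
        simp only [Sum.elim_inl, Sum.elim_inr] at hxy
        have h1 : fA b ∈ A := hfA_mem b
        have h2 := (eB t).2
        rw [Finset.mem_sdiff] at h2
        exact absurd (Finset.mem_inter.mpr ⟨hxy ▸ h1, h2.1⟩) h2.2
      | inr t' =>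
        simp only [Sum.elim_inr] at hxy
        exact congrArg Sum.inr (eB.injective (Subtype.ext hxy))
  · intro i
    show β (ρ0 i) = _
    rw [hρ0]
    unfold fB
    unfold canonβ
    have hmin : min r m = r := min_eq_left hrm
    by_cases h : (i : ℕ) < r
    · rw [dif_pos h, dif_pos (by omega : (i : ℕ) < min r m)]
      simp only [Sum.elim_inl]
      unfold fA
      rw [dif_pos h]
    · rw [dif_neg h, dif_neg (by omega : ¬ (i : ℕ) < min r m)]
      simp only [Sum.elim_inr]

lemma J_canon {m0 m1 : ℕ} (F0 F1 : Measure ℝ) [IsProbabilityMeasure F0] [IsProbabilityMeasure F1]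
    (h : (Fin m0 → ℝ) → (Fin m1 → ℝ) → ℝ)
    (hMeas : Measurable (fun p : (Fin m0 → ℝ) × (Fin m1 → ℝ) => h p.1 p.2))
    (hsymm0 : ∀ (e : Equiv.Perm (Fin m0)) (x : Fin m0 → ℝ) (y : Fin m1 → ℝ),
      h (x ∘ e) y = h x y)
    (hsymm1 : ∀ (e : Equiv.Perm (Fin m1)) (x : Fin m0 → ℝ) (y : Fin m1 → ℝ),
      h x (y ∘ e) = h x y)
    {ι0 ι1 : Type*} [Fintype ι0] [DecidableEq ι0] [Fintype ι1] [DecidableEq ι1]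
    {r s : ℕ} {α β : Fin m0 → ι0} {γ δ : Fin m1 → ι1}
    (hα : Function.Injective α) (hβ : Function.Injective β)
    (hγ : Function.Injective γ) (hδ : Function.Injective δ)
    (hr' : ((Finset.univ.image α) ∩ (Finset.univ.image β)).card = r)
    (hs' : ((Finset.univ.image γ) ∩ (Finset.univ.image δ)).card = s) :
    ∫ w : (ι0 → ℝ) × (ι1 → ℝ), h (w.1 ∘ α) (w.2 ∘ γ) * h (w.1 ∘ β) (w.2 ∘ δ)
        ∂(MM F0 F1 ι0 ι1)
      = ∫ v : ((Fin m0 ⊕ Fin (m0 - r)) → ℝ) × ((Fin m1 ⊕ Fin (m1 - s)) → ℝ),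
          h (v.1 ∘ Sum.inl) (v.2 ∘ Sum.inl) * h (v.1 ∘ canonβ m0 r) (v.2 ∘ canonβ m1 s)
          ∂(MM F0 F1 (Fin m0 ⊕ Fin (m0 - r)) (Fin m1 ⊕ Fin (m1 - s))) := by
  obtain ⟨π0, ρ0, j0, hj0, hπ0, hρ0⟩ := exists_reindex hα hβ hr'
  obtain ⟨π1, ρ1, j1, hj1, hπ1, hρ1⟩ := exists_reindex hγ hδ hs'
  have step1 : ∀ w : (ι0 → ℝ) × (ι1 → ℝ),
      h (w.1 ∘ α) (w.2 ∘ γ) * h (w.1 ∘ β) (w.2 ∘ δ)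
      = (fun v : ((Fin m0 ⊕ Fin (m0 - r)) → ℝ) × ((Fin m1 ⊕ Fin (m1 - s)) → ℝ) =>
          h (v.1 ∘ Sum.inl) (v.2 ∘ Sum.inl) * h (v.1 ∘ canonβ m0 r) (v.2 ∘ canonβ m1 s))
          (w.1 ∘ j0, w.2 ∘ j1) := by
    intro w
    dsimp only
    rw [← hsymm0 π0 (w.1 ∘ α) (w.2 ∘ γ), ← hsymm1 π1 ((w.1 ∘ α) ∘ π0) (w.2 ∘ γ),
      ← hsymm0 ρ0 (w.1 ∘ β) (w.2 ∘ δ), ← hsymm1 ρ1 ((w.1 ∘ β) ∘ ρ0) (w.2 ∘ δ)]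
    congr 1
    · congr 1
      · funext i; simp only [Function.comp_apply]; rw [hπ0]
      · funext i; simp only [Function.comp_apply]; rw [hπ1]
    · congr 1
      · funext i; simp only [Function.comp_apply]; rw [hρ0]
      · funext i; simp only [Function.comp_apply]; rw [hρ1]
  rw [integral_congr_ae (Filter.Eventually.of_forall step1)]
  exact integral_comp_pair hj0 hj1
    (((meas_comp_pair hMeas Sum.inl Sum.inl).mul
      (meas_comp_pair hMeas (canonβ m0 r) (canonβ m1 s))).aestronglyMeasurable)

lemma card_lhs {a m0 n0 : ℕ} (ha : a ≤ m0) (σ0 : Fin a → Fin n0) (τ0 : Fin m0 → Fin n0) {r : ℕ}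
    (hr : ((Finset.univ.image σ0) ∩ (Finset.univ.image τ0)).card = r)
    (A0 : Fin m0 → Fin n0 ⊕ Fin m0)
    (hA0_def : A0 = fun i : Fin m0 => if hi : (i : ℕ) < a then Sum.inl (σ0 ⟨i, hi⟩) else Sum.inr i)
    (B0 : Fin m0 → Fin n0 ⊕ Fin m0) (hB0_def : B0 = fun i => Sum.inl (τ0 i)) :
    ((Finset.univ.image A0) ∩ (Finset.univ.image B0)).card = r := by
  classical
  have himg : (Finset.univ.image A0) ∩ (Finset.univ.image B0)
      = ((Finset.univ.image σ0) ∩ (Finset.univ.image τ0)).image Sum.inl := by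
    ext x
    simp only [Finset.mem_inter, Finset.mem_image, Finset.mem_univ, true_and]
    constructor
    · rintro ⟨⟨i, hi⟩, ⟨k, hk⟩⟩
      subst hA0_def hB0_def
      dsimp only at hi hk
      by_cases h : (i : ℕ) < a
      · rw [dif_pos h] at hi
        refine ⟨σ0 ⟨i, h⟩, ⟨⟨⟨i, h⟩, rfl⟩, ⟨k, ?_⟩⟩, hi⟩
        rw [← hi] at hk
        exact Sum.inl_injective hk
      · rw [dif_neg h] at hi
        rw [← hi] at hk
        exact absurd hk (by simp)
    · rintro ⟨y, ⟨⟨t, ht⟩, ⟨k, hk⟩⟩, hx⟩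
      subst hA0_def hB0_def
      constructor
      · refine ⟨⟨(t : ℕ), lt_of_lt_of_le t.isLt ha⟩, ?_⟩
        dsimp only
        rw [dif_pos (show ((⟨(t : ℕ), lt_of_lt_of_le t.isLt ha⟩ : Fin m0) : ℕ) < a from t.isLt)]
        rw [show (⟨((⟨(t : ℕ), lt_of_lt_of_le t.isLt ha⟩ : Fin m0) : ℕ), t.isLt⟩ : Fin a) = t from
          Fin.ext rfl, ht, hx]
      · exact ⟨k, by dsimp only; rw [hk, hx]⟩
  rw [himg, Finset.card_image_of_injective _ Sum.inl_injective, hr]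

lemma inj_mixed {m r : ℕ} {K : Type*} {F : Fin r → K} {G : Fin m → K}
    (hF : Function.Injective F) (hG : Function.Injective G) (hd : ∀ t i, F t ≠ G i) :
    Function.Injective (fun i : Fin m => if hi : (i : ℕ) < r then F ⟨i, hi⟩ else G i) := by
  intro i j hij
  dsimp only at hij
  split_ifs at hij with h1 h2 h2
  · exact Fin.ext (by simpa [Fin.mk.injEq] using congrArg Fin.val (hF hij))
  · exact absurd hij (hd _ _)
  · exact absurd hij.symm (hd _ _)
  · exact hG hij

lemma card_de {m r : ℕ} {K : Type*} [DecidableEq K] (hrm : r ≤ m)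
    {F : Fin r → K} {G G' : Fin m → K} (hF : Function.Injective F)
    (hd : ∀ t i, F t ≠ G i) (hd' : ∀ t i, F t ≠ G' i) (hGG' : ∀ i j, G i ≠ G' j)
    (D E : Fin m → K)
    (hD : D = fun i : Fin m => if hi : (i : ℕ) < r then F ⟨i, hi⟩ else G i)
    (hE : E = fun i : Fin m => if hi : (i : ℕ) < r then F ⟨i, hi⟩ else G' i) :
    ((Finset.univ.image D) ∩ (Finset.univ.image E)).card = r := by
  classical
  have himg : (Finset.univ.image D) ∩ (Finset.univ.image E)
      = (Finset.univ : Finset (Fin r)).image F := by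
    ext x
    simp only [Finset.mem_inter, Finset.mem_image, Finset.mem_univ, true_and]
    constructor
    · rintro ⟨⟨i, hi⟩, ⟨k, hk⟩⟩
      subst hD hE
      dsimp only at hi hk
      by_cases h1 : (i : ℕ) < r
      · rw [dif_pos h1] at hi
        exact ⟨⟨i, h1⟩, hi⟩
      · rw [dif_neg h1] at hi
        by_cases h2 : (k : ℕ) < r
        · rw [dif_pos h2] at hk
          exact absurd (hk.trans hi.symm) (hd _ _)
        · rw [dif_neg h2] at hk
          exact absurd (hi.trans hk.symm) (hGG' _ _)
    · rintro ⟨t, ht⟩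
      subst hD hE
      constructor
      · refine ⟨⟨(t : ℕ), lt_of_lt_of_le t.isLt hrm⟩, ?_⟩
        dsimp only
        rw [dif_pos (show ((⟨(t : ℕ), lt_of_lt_of_le t.isLt hrm⟩ : Fin m) : ℕ) < r from t.isLt)]
        rw [show (⟨((⟨(t : ℕ), lt_of_lt_of_le t.isLt hrm⟩ : Fin m) : ℕ), t.isLt⟩ : Fin r) = t from
          Fin.ext rfl, ht]
      · refine ⟨⟨(t : ℕ), lt_of_lt_of_le t.isLt hrm⟩, ?_⟩
        dsimp only
        rw [dif_pos (show ((⟨(t : ℕ), lt_of_lt_of_le t.isLt hrm⟩ : Fin m) : ℕ) < r from t.isLt)]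
        rw [show (⟨((⟨(t : ℕ), lt_of_lt_of_le t.isLt hrm⟩ : Fin m) : ℕ), t.isLt⟩ : Fin r) = t from
          Fin.ext rfl, ht]
  rw [himg, Finset.card_image_of_injective _ hF, Finset.card_univ, Fintype.card_fin]

/-- The `(a,b)`-projection of a two-sample kernel `h`, realized via independence as the
integral of `h` over the coordinates beyond the first `a` (resp. `b`) ones. -/
noncomputable def proj {m0 m1 : ℕ} (F0 F1 : Measure ℝ)
    (h : (Fin m0 → ℝ) → (Fin m1 → ℝ) → ℝ) (a b : ℕ)
    (u : Fin a → ℝ) (v : Fin b → ℝ) : ℝ :=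
  ∫ p : (Fin m0 → ℝ) × (Fin m1 → ℝ),
    h (fun i => if hi : (i : ℕ) < a then u ⟨i, hi⟩ else p.1 i)
      (fun j => if hj : (j : ℕ) < b then v ⟨j, hj⟩ else p.2 j)
  ∂((Measure.pi fun _ : Fin m0 => F0).prod (Measure.pi fun _ : Fin m1 => F1))

/-- `ξ_{a,b}`, the variance of the `(a,b)`-projection evaluated at i.i.d. arguments. -/
noncomputable def xi {m0 m1 : ℕ} (F0 F1 : Measure ℝ)
    (h : (Fin m0 → ℝ) → (Fin m1 → ℝ) → ℝ) (a b : ℕ) : ℝ :=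
  (∫ q : (Fin a → ℝ) × (Fin b → ℝ), (proj F0 F1 h a b q.1 q.2) ^ 2
      ∂((Measure.pi fun _ : Fin a => F0).prod (Measure.pi fun _ : Fin b => F1))) -
  (∫ q : (Fin a → ℝ) × (Fin b → ℝ), proj F0 F1 h a b q.1 q.2
      ∂((Measure.pi fun _ : Fin a => F0).prod (Measure.pi fun _ : Fin b => F1))) ^ 2



/-- helper: measurability of elim-combination with a fixed left part -/
lemma measurable_elim_pair {ι0 ι1 κ0 κ1 : Type*} (x : ι0 → ℝ) (y : ι1 → ℝ) :
    Measurable (fun v : (κ0 → ℝ) × (κ1 → ℝ) =>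
      ((Sum.elim x v.1 : ι0 ⊕ κ0 → ℝ), (Sum.elim y v.2 : ι1 ⊕ κ1 → ℝ))) := by
  refine Measurable.prodMk ?_ ?_
  · refine measurable_pi_lambda _ fun i => ?_
    cases i with
    | inl i => simpa using measurable_const
    | inr i => simpa [Function.comp_def] using (measurable_pi_apply i).comp measurable_fst
  · refine measurable_pi_lambda _ fun i => ?_
    cases i with
    | inl i => simpa using measurable_const
    | inr i => simpa [Function.comp_def] using (measurable_pi_apply i).comp measurable_snd


/-- if a projection `h_{a,b}` and the full kernel `h` are evaluated at argument
tuples sharing exactly `r` common first-sample observations and `s` common second-sample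
observations, then `E[h_{a,b}(...) · h(...)] = ξ_{r,s} = Var(h_{r,s})`. -/
theorem projection_kernel_product_expectation_eq_xi
    {m0 m1 n0 n1 : ℕ} (F0 F1 : Measure ℝ) [IsProbabilityMeasure F0] [IsProbabilityMeasure F1]
    (h : (Fin m0 → ℝ) → (Fin m1 → ℝ) → ℝ)
    (hMeas : Measurable (fun p : (Fin m0 → ℝ) × (Fin m1 → ℝ) => h p.1 p.2))
    (hL2 : MemLp (fun p : (Fin m0 → ℝ) × (Fin m1 → ℝ) => h p.1 p.2) 2
      ((Measure.pi fun _ : Fin m0 => F0).prod (Measure.pi fun _ : Fin m1 => F1)))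
    (hZero : ∫ p : (Fin m0 → ℝ) × (Fin m1 → ℝ), h p.1 p.2
      ∂((Measure.pi fun _ : Fin m0 => F0).prod (Measure.pi fun _ : Fin m1 => F1)) = 0)
    (hsymm0 : ∀ (e : Equiv.Perm (Fin m0)) (x : Fin m0 → ℝ) (y : Fin m1 → ℝ),
      h (x ∘ e) y = h x y)
    (hsymm1 : ∀ (e : Equiv.Perm (Fin m1)) (x : Fin m0 → ℝ) (y : Fin m1 → ℝ),
      h x (y ∘ e) = h x y)
    (a b r s : ℕ) (ha : a ≤ m0) (hb : b ≤ m1) (hra : r ≤ a) (hsb : s ≤ b)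
    (σ0 : Fin a → Fin n0) (τ0 : Fin m0 → Fin n0)
    (hσ0 : Function.Injective σ0) (hτ0 : Function.Injective τ0)
    (hr : ((Finset.univ.image σ0) ∩ (Finset.univ.image τ0)).card = r)
    (σ1 : Fin b → Fin n1) (τ1 : Fin m1 → Fin n1)
    (hσ1 : Function.Injective σ1) (hτ1 : Function.Injective τ1)
    (hs : ((Finset.univ.image σ1) ∩ (Finset.univ.image τ1)).card = s) :
    ∫ w : (Fin n0 → ℝ) × (Fin n1 → ℝ),
        (proj F0 F1 h a b (fun i => w.1 (σ0 i)) (fun j => w.2 (σ1 j))) *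
        (h (fun i => w.1 (τ0 i)) (fun j => w.2 (τ1 j)))
      ∂((Measure.pi fun _ : Fin n0 => F0).prod (Measure.pi fun _ : Fin n1 => F1)) =
      xi F0 F1 h r s := by
  classical
  have hL2' : MemLp (fun p : (Fin m0 → ℝ) × (Fin m1 → ℝ) => h p.1 p.2) 2
      (MM F0 F1 (Fin m0) (Fin m1)) := hL2
  -- the canonical value
  set Jc : ℝ := ∫ v : ((Fin m0 ⊕ Fin (m0 - r)) → ℝ) × ((Fin m1 ⊕ Fin (m1 - s)) → ℝ),
      h (v.1 ∘ Sum.inl) (v.2 ∘ Sum.inl) * h (v.1 ∘ canonβ m0 r) (v.2 ∘ canonβ m1 s)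
      ∂(MM F0 F1 (Fin m0 ⊕ Fin (m0 - r)) (Fin m1 ⊕ Fin (m1 - s))) with hJc_def
  -- ==================== LHS ====================
  set A0 : Fin m0 → Fin n0 ⊕ Fin m0 :=
    fun i => if hi : (i : ℕ) < a then Sum.inl (σ0 ⟨i, hi⟩) else Sum.inr i with hA0_def
  set A1 : Fin m1 → Fin n1 ⊕ Fin m1 :=
    fun i => if hi : (i : ℕ) < b then Sum.inl (σ1 ⟨i, hi⟩) else Sum.inr i with hA1_def
  set B0 : Fin m0 → Fin n0 ⊕ Fin m0 := fun i => Sum.inl (τ0 i) with hB0_def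
  set B1 : Fin m1 → Fin n1 ⊕ Fin m1 := fun i => Sum.inl (τ1 i) with hB1_def
  have hA0inj : Function.Injective A0 := by
    intro i j hij
    simp only [hA0_def] at hij
    split_ifs at hij with h1 h2 h2 <;>
      simp only [Sum.inl.injEq, Sum.inr.injEq] at hij
    · have := hσ0 hij; exact Fin.ext (by simpa [Fin.mk.injEq] using congrArg Fin.val this)
    · exact hij
  have hA1inj : Function.Injective A1 := by
    intro i j hij
    simp only [hA1_def] at hij
    split_ifs at hij with h1 h2 h2 <;>
      simp only [Sum.inl.injEq, Sum.inr.injEq] at hij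
    · have := hσ1 hij; exact Fin.ext (by simpa [Fin.mk.injEq] using congrArg Fin.val this)
    · exact hij
  have hB0inj : Function.Injective B0 := fun i j hij => by
    simp only [hB0_def, Sum.inl.injEq] at hij; exact hτ0 hij
  have hB1inj : Function.Injective B1 := fun i j hij => by
    simp only [hB1_def, Sum.inl.injEq] at hij; exact hτ1 hij
  have hcard0 : ((Finset.univ.image A0) ∩ (Finset.univ.image B0)).card = r :=
    card_lhs ha σ0 τ0 hr A0 hA0_def B0 hB0_def
  have hcard1 : ((Finset.univ.image A1) ∩ (Finset.univ.image B1)).card = s :=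
    card_lhs hb σ1 τ1 hs A1 hA1_def B1 hB1_def
  set G : ((Fin n0 ⊕ Fin m0) → ℝ) × ((Fin n1 ⊕ Fin m1) → ℝ) → ℝ :=
    fun v => h (v.1 ∘ A0) (v.2 ∘ A1) * h (v.1 ∘ B0) (v.2 ∘ B1) with hG_def
  have hGmeas : Measurable G :=
    (meas_comp_pair hMeas A0 A1).mul (meas_comp_pair hMeas B0 B1)
  have hGint : Integrable G (MM F0 F1 (Fin n0 ⊕ Fin m0) (Fin n1 ⊕ Fin m1)) :=
    integrable_mul_L2 (memL2_comp_pair hL2' hA0inj hA1inj) (memL2_comp_pair hL2' hB0inj hB1inj)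
  have hLHS : ∫ w : (Fin n0 → ℝ) × (Fin n1 → ℝ),
        (proj F0 F1 h a b (fun i => w.1 (σ0 i)) (fun j => w.2 (σ1 j))) *
        (h (fun i => w.1 (τ0 i)) (fun j => w.2 (τ1 j)))
      ∂(MM F0 F1 (Fin n0) (Fin n1)) = Jc := by
    have step1 : ∀ w : (Fin n0 → ℝ) × (Fin n1 → ℝ),
        (proj F0 F1 h a b (fun i => w.1 (σ0 i)) (fun j => w.2 (σ1 j))) *
        (h (fun i => w.1 (τ0 i)) (fun j => w.2 (τ1 j)))
        = ∫ p : (Fin m0 → ℝ) × (Fin m1 → ℝ),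
            G (Sum.elim w.1 p.1, Sum.elim w.2 p.2) ∂(MM F0 F1 (Fin m0) (Fin m1)) := by
      intro w
      rw [proj, ← integral_mul_const]
      refine integral_congr_ae (Filter.Eventually.of_forall fun p => ?_)
      simp only [hG_def]
      congr 1
      · congr 1
        · funext i
          by_cases hi : (i : ℕ) < a <;>
            simp [hA0_def, hi]
        · funext i
          by_cases hi : (i : ℕ) < b <;>
            simp [hA1_def, hi]
    rw [integral_congr_ae (Filter.Eventually.of_forall step1)]
    rw [merge_pair hGmeas.aestronglyMeasurable hGint]
    rw [hG_def, hJc_def]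
    exact J_canon F0 F1 h hMeas hsymm0 hsymm1 hA0inj hB0inj hA1inj hB1inj hcard0 hcard1
  -- ==================== RHS ====================
  have hRHS : xi F0 F1 h r s = Jc := by
    have hrm : r ≤ m0 := hra.trans ha
    have hsm : s ≤ m1 := hsb.trans hb
    set C0 : Fin m0 → Fin r ⊕ Fin m0 :=
      fun i => if hi : (i : ℕ) < r then Sum.inl ⟨i, hi⟩ else Sum.inr i with hC0_def
    set C1 : Fin m1 → Fin s ⊕ Fin m1 :=
      fun i => if hi : (i : ℕ) < s then Sum.inl ⟨i, hi⟩ else Sum.inr i with hC1_def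
    have hC0inj : Function.Injective C0 := hC0_def ▸ inj_mixed Sum.inl_injective
      Sum.inr_injective (fun t i => by simp)
    have hC1inj : Function.Injective C1 := hC1_def ▸ inj_mixed Sum.inl_injective
      Sum.inr_injective (fun t i => by simp)
    set D0 : Fin m0 → Fin r ⊕ (Fin m0 ⊕ Fin m0) :=
      fun i => if hi : (i : ℕ) < r then Sum.inl ⟨i, hi⟩ else Sum.inr (Sum.inl i) with hD0_def
    set E0 : Fin m0 → Fin r ⊕ (Fin m0 ⊕ Fin m0) :=
      fun i => if hi : (i : ℕ) < r then Sum.inl ⟨i, hi⟩ else Sum.inr (Sum.inr i) with hE0_def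
    set D1 : Fin m1 → Fin s ⊕ (Fin m1 ⊕ Fin m1) :=
      fun i => if hi : (i : ℕ) < s then Sum.inl ⟨i, hi⟩ else Sum.inr (Sum.inl i) with hD1_def
    set E1 : Fin m1 → Fin s ⊕ (Fin m1 ⊕ Fin m1) :=
      fun i => if hi : (i : ℕ) < s then Sum.inl ⟨i, hi⟩ else Sum.inr (Sum.inr i) with hE1_def
    have hD0inj : Function.Injective D0 := hD0_def ▸ inj_mixed Sum.inl_injective
      (Sum.inr_injective.comp Sum.inl_injective) (fun t i => by simp)
    have hE0inj : Function.Injective E0 := hE0_def ▸ inj_mixed Sum.inl_injective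
      (Sum.inr_injective.comp Sum.inr_injective) (fun t i => by simp)
    have hD1inj : Function.Injective D1 := hD1_def ▸ inj_mixed Sum.inl_injective
      (Sum.inr_injective.comp Sum.inl_injective) (fun t i => by simp)
    have hE1inj : Function.Injective E1 := hE1_def ▸ inj_mixed Sum.inl_injective
      (Sum.inr_injective.comp Sum.inr_injective) (fun t i => by simp)
    have hcardD0 : ((Finset.univ.image D0) ∩ (Finset.univ.image E0)).card = r :=
      card_de hrm Sum.inl_injective (fun t i => by simp) (fun t i => by simp)
        (fun i j => by simp) D0 E0 hD0_def hE0_def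
    have hcardD1 : ((Finset.univ.image D1) ∩ (Finset.univ.image E1)).card = s :=
      card_de hsm Sum.inl_injective (fun t i => by simp) (fun t i => by simp)
        (fun i j => by simp) D1 E1 hD1_def hE1_def
    -- mean of the projection is zero
    have hzero : ∫ q : (Fin r → ℝ) × (Fin s → ℝ), proj F0 F1 h r s q.1 q.2
        ∂(MM F0 F1 (Fin r) (Fin s)) = 0 := by
      set g2 : ((Fin r ⊕ Fin m0) → ℝ) × ((Fin s ⊕ Fin m1) → ℝ) → ℝ :=
        fun v => h (v.1 ∘ C0) (v.2 ∘ C1) with hg2_def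
      have hg2meas : Measurable g2 := meas_comp_pair hMeas C0 C1
      have hg2int : Integrable g2 (MM F0 F1 (Fin r ⊕ Fin m0) (Fin s ⊕ Fin m1)) :=
        (memL2_comp_pair hL2' hC0inj hC1inj).integrable one_le_two
      have step : ∀ q : (Fin r → ℝ) × (Fin s → ℝ), proj F0 F1 h r s q.1 q.2
          = ∫ p : (Fin m0 → ℝ) × (Fin m1 → ℝ),
              g2 (Sum.elim q.1 p.1, Sum.elim q.2 p.2) ∂(MM F0 F1 (Fin m0) (Fin m1)) := by
        intro q
        rw [proj]
        refine integral_congr_ae (Filter.Eventually.of_forall fun p => ?_)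
        simp only [hg2_def]
        congr 1
        · funext i
          by_cases hi : (i : ℕ) < r <;> simp [hC0_def, hi]
        · funext i
          by_cases hi : (i : ℕ) < s <;> simp [hC1_def, hi]
      rw [integral_congr_ae (Filter.Eventually.of_forall step),
        merge_pair hg2meas.aestronglyMeasurable hg2int, hg2_def]
      have htrans := integral_comp_pair (F0 := F0) (F1 := F1) hC0inj hC1inj
        (g := fun p : (Fin m0 → ℝ) × (Fin m1 → ℝ) => h p.1 p.2) hL2'.aestronglyMeasurable
      rw [show (∫ v : ((Fin r ⊕ Fin m0) → ℝ) × ((Fin s ⊕ Fin m1) → ℝ),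
          h (v.1 ∘ C0) (v.2 ∘ C1) ∂(MM F0 F1 (Fin r ⊕ Fin m0) (Fin s ⊕ Fin m1)))
          = ∫ p : (Fin m0 → ℝ) × (Fin m1 → ℝ), h p.1 p.2 ∂(MM F0 F1 (Fin m0) (Fin m1))
          from htrans]
      exact hZero
    -- second moment of the projection is `Jc`
    have hsq : ∫ q : (Fin r → ℝ) × (Fin s → ℝ), (proj F0 F1 h r s q.1 q.2) ^ 2
        ∂(MM F0 F1 (Fin r) (Fin s)) = Jc := by
      set G2 : ((Fin r ⊕ (Fin m0 ⊕ Fin m0)) → ℝ) × ((Fin s ⊕ (Fin m1 ⊕ Fin m1)) → ℝ) → ℝ :=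
        fun v => h (v.1 ∘ D0) (v.2 ∘ D1) * h (v.1 ∘ E0) (v.2 ∘ E1) with hG2_def
      have hG2meas : Measurable G2 :=
        (meas_comp_pair hMeas D0 D1).mul (meas_comp_pair hMeas E0 E1)
      have hG2int : Integrable G2
          (MM F0 F1 (Fin r ⊕ (Fin m0 ⊕ Fin m0)) (Fin s ⊕ (Fin m1 ⊕ Fin m1))) :=
        integrable_mul_L2 (memL2_comp_pair hL2' hD0inj hD1inj)
          (memL2_comp_pair hL2' hE0inj hE1inj)
      have hXi := mp_xi (F0 := F0) (F1 := F1) (ι0 := Fin m0) (ι1 := Fin m1)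
        (κ0 := Fin m0) (κ1 := Fin m1)
      have step : ∀ q : (Fin r → ℝ) × (Fin s → ℝ), (proj F0 F1 h r s q.1 q.2) ^ 2
          = ∫ v : ((Fin m0 ⊕ Fin m0) → ℝ) × ((Fin m1 ⊕ Fin m1) → ℝ),
              G2 (Sum.elim q.1 v.1, Sum.elim q.2 v.2)
              ∂(MM F0 F1 (Fin m0 ⊕ Fin m0) (Fin m1 ⊕ Fin m1)) := by
        intro q
        have hGq : AEStronglyMeasurable
            (fun v : ((Fin m0 ⊕ Fin m0) → ℝ) × ((Fin m1 ⊕ Fin m1) → ℝ) =>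
              G2 (Sum.elim q.1 v.1, Sum.elim q.2 v.2))
            (Measure.map (fun z : ((Fin m0 → ℝ) × (Fin m1 → ℝ)) × ((Fin m0 → ℝ) × (Fin m1 → ℝ)) =>
              ((Sum.elim z.1.1 z.2.1 : Fin m0 ⊕ Fin m0 → ℝ),
               (Sum.elim z.1.2 z.2.2 : Fin m1 ⊕ Fin m1 → ℝ)))
              ((MM F0 F1 (Fin m0) (Fin m1)).prod (MM F0 F1 (Fin m0) (Fin m1)))) := by
          rw [hXi.map_eq]
          exact (hG2meas.comp (measurable_elim_pair q.1 q.2)).aestronglyMeasurable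
        calc (proj F0 F1 h r s q.1 q.2) ^ 2
            = ∫ z : ((Fin m0 → ℝ) × (Fin m1 → ℝ)) × ((Fin m0 → ℝ) × (Fin m1 → ℝ)),
                (fun p : (Fin m0 → ℝ) × (Fin m1 → ℝ) =>
                  h (fun i => if hi : (i : ℕ) < r then q.1 ⟨i, hi⟩ else p.1 i)
                    (fun j => if hj : (j : ℕ) < s then q.2 ⟨j, hj⟩ else p.2 j)) z.1 *
                (fun p : (Fin m0 → ℝ) × (Fin m1 → ℝ) =>
                  h (fun i => if hi : (i : ℕ) < r then q.1 ⟨i, hi⟩ else p.1 i)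
                    (fun j => if hj : (j : ℕ) < s then q.2 ⟨j, hj⟩ else p.2 j)) z.2
                ∂((MM F0 F1 (Fin m0) (Fin m1)).prod (MM F0 F1 (Fin m0) (Fin m1))) := by
              rw [proj, pow_two]
              exact (integral_prod_mul _ _).symm
          _ = ∫ v : ((Fin m0 ⊕ Fin m0) → ℝ) × ((Fin m1 ⊕ Fin m1) → ℝ),
                G2 (Sum.elim q.1 v.1, Sum.elim q.2 v.2)
                ∂(MM F0 F1 (Fin m0 ⊕ Fin m0) (Fin m1 ⊕ Fin m1)) := by
              rw [← hXi.map_eq, integral_map hXi.measurable.aemeasurable hGq]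
              refine integral_congr_ae (Filter.Eventually.of_forall fun z => ?_)
              simp only [hG2_def]
              congr 1
              · congr 1
                · funext i
                  by_cases hi : (i : ℕ) < r <;> simp [hD0_def, hi]
                · funext i
                  by_cases hi : (i : ℕ) < s <;> simp [hD1_def, hi]
              · congr 1
                · funext i
                  by_cases hi : (i : ℕ) < r <;> simp [hE0_def, hi]
                · funext i
                  by_cases hi : (i : ℕ) < s <;> simp [hE1_def, hi]
      rw [integral_congr_ae (Filter.Eventually.of_forall step),
        merge_pair hG2meas.aestronglyMeasurable hG2int, hG2_def, hJc_def]
      exact J_canon F0 F1 h hMeas hsymm0 hsymm1 hD0inj hE0inj hD1inj hE1inj hcardD0 hcardD1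
    rw [xi]
    rw [show (∫ q : (Fin r → ℝ) × (Fin s → ℝ), (proj F0 F1 h r s q.1 q.2) ^ 2
        ∂((Measure.pi fun _ : Fin r => F0).prod (Measure.pi fun _ : Fin s => F1))) = Jc from hsq,
      show (∫ q : (Fin r → ℝ) × (Fin s → ℝ), proj F0 F1 h r s q.1 q.2
        ∂((Measure.pi fun _ : Fin r => F0).prod (Measure.pi fun _ : Fin s => F1))) = 0 from hzero]
    ring
  calc _ = Jc := hLHS
    _ = _ := hRHS.symm
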